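/- arXiv:1905.12664 — 3 statements merged into one kernel-verified Lean document; each statement's English description precedes it below -/
import Mathlib

section
/- Let M be a nonzero ℕⁿ-graded squarefree module over R = K[x₁,…,xₙ]. If the degree-0 component M₀ = 0, then depth M > 0; equivalently, the maximal ideal 𝔪 = (x₁,…,xₙ) is not an associated prime of M. -/
open MvPolynomial

variable (K : Type) [Field K] (n : ℕ)

/-- The graded maximal ideal `𝔪 = (x₁, …, xₙ)` of `R = K[x₁,…,xₙ]`. -/
noncomputable def maxIdeal : Ideal (MvPolynomial (Fin n) K) :=
  Ideal.span (Set.range (MvPolynomial.X : Fin n → MvPolynomial (Fin n) K))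

variable {M : Type} [AddCommGroup M] [Module (MvPolynomial (Fin n) K) M]
  [Module K M] [IsScalarTower K (MvPolynomial (Fin n) K) M]

/-- `ℳ` is an `ℕⁿ`-grading of the `R = K[x₁,…,xₙ]`-module `M`:
`M = ⊕_α ℳ α` and multiplication by `xⱼ` maps `ℳ α` into `ℳ (α + eⱼ)`. -/
def IsNnGrading (ℳ : (Fin n → ℕ) → Submodule K M) : Prop :=
  DirectSum.IsInternal ℳ ∧
    ∀ (α : Fin n → ℕ) (j : Fin n), ∀ x ∈ ℳ α,
      (MvPolynomial.X j : MvPolynomial (Fin n) K) • x ∈ ℳ (α + Pi.single j 1)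

/-- The grading `ℳ` of `M` is squarefree: whenever `αⱼ ≠ 0`, multiplication by `xⱼ`
is bijective from `ℳ α` onto `ℳ (α + eⱼ)`. -/
def IsSquarefreeGrading (ℳ : (Fin n → ℕ) → Submodule K M) : Prop :=
  ∀ (α : Fin n → ℕ) (j : Fin n), α j ≠ 0 →
    (∀ x ∈ ℳ α, (MvPolynomial.X j : MvPolynomial (Fin n) K) • x = 0 → x = 0) ∧
    (∀ y ∈ ℳ (α + Pi.single j 1), ∃ x ∈ ℳ α,
      (MvPolynomial.X j : MvPolynomial (Fin n) K) • x = y)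

set_option linter.unusedSectionVars false in
set_option synthInstance.maxHeartbeats 400000 in
theorem key_squarefree_ann (ℳ : (Fin n → ℕ) → Submodule K M)
    (hgr : IsNnGrading K n ℳ) (hsq : IsSquarefreeGrading K n ℳ) (h0 : ℳ 0 = ⊥)
    (x : M) (hXx : ∀ j : Fin n, (X j : MvPolynomial (Fin n) K) • x = 0) : x = 0 := by
  classical
  obtain ⟨d, hd⟩ := hgr.1.surjective x
  have hsum : x = ∑ α ∈ d.support, ((d α : M)) := by
    rw [← hd, DirectSum.coeAddMonoidHom_eq_dfinsuppSum, DFinsupp.sum]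
  have hcomp : ∀ α ∈ d.support, (d α : M) = 0 := by
    intro α₀ hα₀
    rcases eq_or_ne α₀ 0 with rfl | hne
    · exact (Submodule.mem_bot K).mp (h0.le (d 0).2)
    · obtain ⟨j, hj⟩ := Function.ne_iff.mp hne
      set v : DirectSum (Fin n → ℕ) (fun β => ℳ β) := ∑ α ∈ d.support,
        DirectSum.of (fun β => ℳ β) (α + Pi.single j 1)
          ⟨(X j : MvPolynomial (Fin n) K) • (d α : M), hgr.2 α j _ (d α).2⟩ with hv
      have hv0 : v = 0 := by
        apply hgr.1.injective
        rw [map_sum, map_zero]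
        have : ∀ α ∈ d.support, DirectSum.coeAddMonoidHom ℳ
            (DirectSum.of (fun β => ℳ β) (α + Pi.single j 1)
              ⟨(X j : MvPolynomial (Fin n) K) • (d α : M), hgr.2 α j _ (d α).2⟩)
            = (X j : MvPolynomial (Fin n) K) • (d α : M) := fun α _ =>
          DirectSum.coeAddMonoidHom_of ℳ _ _
        rw [Finset.sum_congr rfl this, ← Finset.smul_sum, ← hsum, hXx j]
      have happ : (v (α₀ + Pi.single j 1) : M)
          = (X j : MvPolynomial (Fin n) K) • (d α₀ : M) := by
        rw [hv, DFinsupp.finset_sum_apply, Submodule.coe_sum]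
        rw [Finset.sum_eq_single α₀]
        · rw [DirectSum.of_eq_same]
        · intro β _ hβ
          have hne2 : β + Pi.single j 1 ≠ α₀ + Pi.single j 1 := fun h => hβ (by simpa using h)
          rw [DirectSum.of_eq_of_ne _ _ _ hne2.symm, Submodule.coe_zero]
        · intro h; exact absurd hα₀ h
      rw [hv0] at happ
      simp only [DirectSum.zero_apply, Submodule.coe_zero] at happ
      exact (hsq α₀ j (by simpa using hj)).1 _ (d α₀).2 happ.symm
  rw [hsum]
  exact Finset.sum_eq_zero hcomp

/-- Let `M` be a nonzero `ℕⁿ`-graded squarefree module over `R = K[x₁,…,xₙ]`.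
If `M₀ = 0`, then `depth M > 0`; equivalently, the maximal ideal `𝔪 = (x₁,…,xₙ)`
is not an associated prime of `M`. -/
theorem squarefree_depth_pos (ℳ : (Fin n → ℕ) → Submodule K M) [Nontrivial M]
    (hgr : IsNnGrading K n ℳ) (hsq : IsSquarefreeGrading K n ℳ) (h0 : ℳ 0 = ⊥) :
    ¬ IsAssociatedPrime (maxIdeal K n) M := by
  intro hass
  obtain ⟨hprime, x, hx⟩ := isAssociatedPrime_iff.mp hass
  have hXx : ∀ j : Fin n, (X j : MvPolynomial (Fin n) K) • x = 0 := by
    intro j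
    have hXmem : (X j : MvPolynomial (Fin n) K) ∈ maxIdeal K n :=
      Ideal.subset_span ⟨j, rfl⟩
    rw [hx] at hXmem
    exact (Submodule.mem_bot _).mp (Submodule.mem_colon_singleton.mp hXmem)
  have hx0 : x = 0 := key_squarefree_ann K n ℳ hgr hsq h0 x hXx
  rw [hx0] at hx
  exact hprime.ne_top (hx.trans (by ext r; simp [Submodule.mem_colon_singleton]))
end

section
/- Let A be a Noetherian ring of dimension d. The dual graph of A is connected if and only if A is connected in codimension 1, i.e. Spec A \ V(𝔞) is connected for every ideal 𝔞 with dim A/𝔞 < d − 1. -/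
section HartshorneAux

open Order

variable {A : Type} [CommRing A]

noncomputable def specQuotIso (I : Ideal A) :
    PrimeSpectrum (A ⧸ I) ≃o {p : PrimeSpectrum A // I ≤ p.asIdeal} where
  toFun q := ⟨⟨q.asIdeal.comap (Ideal.Quotient.mk I), Ideal.comap_isPrime _ _⟩, by
      intro x hx
      show Ideal.Quotient.mk I x ∈ q.asIdeal
      rw [Ideal.Quotient.eq_zero_iff_mem.mpr hx]
      exact q.asIdeal.zero_mem⟩
  invFun p := ⟨(p.1.asIdeal.map (Ideal.Quotient.mk I)),
      Ideal.map_isPrime_of_surjective Ideal.Quotient.mk_surjective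
        (by rw [Ideal.mk_ker]; exact p.2)⟩
  left_inv q := by
    ext1
    exact Ideal.map_comap_of_surjective _ Ideal.Quotient.mk_surjective _
  right_inv p := by
    ext1
    show PrimeSpectrum.mk _ _ = _
    ext1
    dsimp only
    rw [Ideal.comap_map_of_surjective _ Ideal.Quotient.mk_surjective, ← RingHom.ker_eq_comap_bot,
      Ideal.mk_ker, sup_eq_left.mpr p.2]
  map_rel_iff' {q q'} := by
    constructor
    · intro h
      exact (Ideal.comap_le_comap_iff_of_surjective _ Ideal.Quotient.mk_surjective _ _).mp h
    · intro h
      exact Ideal.comap_mono h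

lemma dim_quot (I : Ideal A) :
    ringKrullDim (A ⧸ I) = Order.krullDim {p : PrimeSpectrum A // I ≤ p.asIdeal} :=
  Order.krullDim_eq_of_orderIso (specQuotIso I)

lemma krullDim_add_one_le_krullDim {α β : Type*} [Preorder α] [Preorder β]
    (f : ∀ ℓ : LTSeries α, ∃ ℓ' : LTSeries β, ℓ.length + 1 ≤ ℓ'.length) :
    Order.krullDim α + 1 ≤ Order.krullDim β := by
  rcases isEmpty_or_nonempty α with h | h
  · rw [Order.krullDim_eq_bot]
    simp
  · obtain ⟨ℓ₀, _⟩ := f (RelSeries.singleton _ h.some)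
    have : Nonempty β := ⟨ℓ₀.head⟩
    rw [Order.krullDim_eq_iSup_length (α := α), Order.krullDim_eq_iSup_length (α := β)]
    rw [show ((1 : WithBot ℕ∞)) = ((1 : ℕ∞) : WithBot ℕ∞) from rfl, ← WithBot.coe_add,
      WithBot.coe_le_coe, ENat.iSup_add]
    refine iSup_le fun ℓ => ?_
    obtain ⟨ℓ', hl⟩ := f ℓ
    calc (ℓ.length : ℕ∞) + 1 = ((ℓ.length + 1 : ℕ) : ℕ∞) := by push_cast; ring
    _ ≤ (ℓ'.length : ℕ∞) := by exact_mod_cast hl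
    _ ≤ _ := le_iSup (fun (p : LTSeries β) => (p.length : ℕ∞)) ℓ'

lemma krullDim_add_one_lt_nat {α : Type*} [Preorder α] {d : ℕ}
    (h : ∀ ℓ : LTSeries α, (ℓ.length : WithBot ℕ∞) + 1 < (d : WithBot ℕ∞)) :
    Order.krullDim α + 1 < (d : WithBot ℕ∞) := by
  rcases isEmpty_or_nonempty α with he | he
  · rw [Order.krullDim_eq_bot]
    rw [WithBot.bot_add]
    exact_mod_cast WithBot.bot_lt_coe (d : ℕ∞)
  · have hnat : ∀ ℓ : LTSeries α, ℓ.length + 2 ≤ d := by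
      intro ℓ
      have := h ℓ
      have h2 : ((ℓ.length + 1 : ℕ) : WithBot ℕ∞) < ((d : ℕ) : WithBot ℕ∞) := by
        push_cast; exact_mod_cast this
      exact_mod_cast h2
    have hd2 : 2 ≤ d := by
      have := hnat (RelSeries.singleton _ he.some)
      simpa using this
    have hle : Order.krullDim α ≤ ((d - 2 : ℕ) : WithBot ℕ∞) := by
      rw [Order.krullDim_eq_iSup_length]
      rw [show (((d-2:ℕ)) : WithBot ℕ∞) = (((d-2:ℕ) : ℕ∞) : WithBot ℕ∞) from rfl,
        WithBot.coe_le_coe]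
      exact iSup_le fun ℓ => by exact_mod_cast (by have := hnat ℓ; omega : ℓ.length ≤ d - 2)
    calc Order.krullDim α + 1 ≤ ((d - 2 : ℕ) : WithBot ℕ∞) + 1 := by
          exact add_le_add_left hle 1
    _ = ((d - 1 : ℕ) : WithBot ℕ∞) := by
          rw [show ((1 : WithBot ℕ∞)) = ((1 : ℕ) : WithBot ℕ∞) from rfl]
          rw [← Nat.cast_add]
          congr 1
          omega
    _ < (d : WithBot ℕ∞) := by exact_mod_cast (by omega : d - 1 < d)

lemma dim_quot_mono {I J : Ideal A}
    (h : ∀ p : PrimeSpectrum A, J ≤ p.asIdeal → I ≤ p.asIdeal) :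
    ringKrullDim (A ⧸ J) ≤ ringKrullDim (A ⧸ I) := by
  rw [dim_quot, dim_quot]
  exact Order.krullDim_le_of_strictMono
    (fun p => (⟨p.1, h p.1 p.2⟩ : {p : PrimeSpectrum A // I ≤ p.asIdeal}))
    (fun a b hab => by exact hab)

lemma exists_prime_not_mem {I J : Ideal A}
    (h : ringKrullDim (A ⧸ I) < ringKrullDim (A ⧸ J)) :
    ∃ p : PrimeSpectrum A, J ≤ p.asIdeal ∧ ¬ I ≤ p.asIdeal := by
  by_contra hc
  push_neg at hc
  exact absurd (dim_quot_mono hc) (not_le_of_gt h)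

lemma dim_quot_add_one_le {p b : Ideal A} [p.IsPrime] (hpb : p ≤ b) (hbp : ¬ b ≤ p) :
    ringKrullDim (A ⧸ b) + 1 ≤ ringKrullDim (A ⧸ p) := by
  rw [dim_quot, dim_quot]
  apply krullDim_add_one_le_krullDim
  intro ℓ
  have hmap : StrictMono (fun (P : {P : PrimeSpectrum A // b ≤ P.asIdeal}) =>
      (⟨P.1, hpb.trans P.2⟩ : {P : PrimeSpectrum A // p ≤ P.asIdeal})) :=
    fun a b hab => by exact hab
  set ℓ' := ℓ.map _ hmap with hℓ'
  have hlt : (⟨⟨p, inferInstance⟩, le_rfl⟩ : {P : PrimeSpectrum A // p ≤ P.asIdeal}) < ℓ'.head := by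
    have h1 : p ≤ (ℓ.head).1.asIdeal := hpb.trans ℓ.head.2
    have h2 : p ≠ (ℓ.head).1.asIdeal := fun he => hbp (he ▸ ℓ.head.2)
    exact Subtype.mk_lt_mk.mpr
      (lt_of_le_of_ne h1 (fun hc => h2 (congrArg PrimeSpectrum.asIdeal hc)))
  refine ⟨ℓ'.cons _ hlt, ?_⟩
  have : ℓ'.length = ℓ.length := rfl
  simp [this]

lemma minimal_le_eq {p q : Ideal A} (hp : p ∈ minimalPrimes A) (hq : q ∈ minimalPrimes A)
    (h : q ≤ p) : p = q :=
  le_antisymm (hp.2 ⟨hq.1.1, bot_le⟩ h) h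

lemma exists_min_le (x : PrimeSpectrum A) : ∃ q ∈ minimalPrimes A, q ≤ x.asIdeal := by
  have := x.isPrime
  obtain ⟨q, hq, hqx⟩ := Ideal.exists_minimalPrimes_le (bot_le : (⊥ : Ideal A) ≤ x.asIdeal)
  exact ⟨q, hq, hqx⟩

lemma dim_quot_unique_min {p : Ideal A} (hp : p ∈ minimalPrimes A)
    (hu : ∀ q ∈ minimalPrimes A, q = p) :
    ringKrullDim (A ⧸ p) = ringKrullDim A := by
  have : p.IsPrime := hp.1.1
  have hall : ∀ x : PrimeSpectrum A, p ≤ x.asIdeal := by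
    intro x
    obtain ⟨q, hq, hqx⟩ := exists_min_le x
    exact (hu q hq) ▸ hqx
  rw [dim_quot, ringKrullDim]
  apply le_antisymm
  · exact Order.krullDim_le_of_strictMono Subtype.val (fun a b h => h)
  · exact Order.krullDim_le_of_strictMono (fun x => ⟨x, hall x⟩) (fun a b h => h)

lemma preirr_inter_open {X : Type*} [TopologicalSpace X] {s W : Set X}
    (hs : IsPreirreducible s) (hW : IsOpen W) : IsPreirreducible (s ∩ W) := by
  rintro u v hu hv ⟨x, ⟨hxs, hxW⟩, hxu⟩ ⟨y, ⟨hys, hyW⟩, hyv⟩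
  obtain ⟨z, hzs, hz⟩ := hs (W ∩ u) (W ∩ v) (hW.inter hu) (hW.inter hv)
    ⟨x, hxs, hxW, hxu⟩ ⟨y, hys, hyW, hyv⟩
  exact ⟨z, ⟨hzs, hz.1.1⟩, hz.1.2, hz.2.2⟩

lemma add_one_lt_cancel {a b : WithBot ℕ∞} (h : a + 1 < b + 1) : a < b := by
  by_contra hc
  push_neg at hc
  exact absurd (add_le_add_left hc 1) (not_le_of_gt h)

lemma self_le_add_one (a : WithBot ℕ∞) : a ≤ a + 1 := by
  calc a = a + 0 := (add_zero a).symm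
  _ ≤ a + 1 := add_le_add_right zero_le_one a

end HartshorneAux

/-- The dual graph (Hochster–Huneke graph) of a commutative ring `A`: vertices are the
minimal primes of `A`, and `{𝔭, 𝔮}` is an edge iff `dim A/(𝔭+𝔮) = dim A − 1`. -/
noncomputable def dualGraph (A : Type) [CommRing A] :
    SimpleGraph {p : Ideal A // p ∈ minimalPrimes A} where
  Adj p q := p ≠ q ∧ ringKrullDim (A ⧸ (p.1 ⊔ q.1)) + 1 = ringKrullDim A
  symm := by
    constructor
    intro p q h
    exact ⟨h.1.symm, by rw [sup_comm]; exact h.2⟩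
  loopless := by constructor; intro p h; exact h.1 rfl

/-- The combinatorial dual graph of a simplicial complex `Δ` (with top dimension `d−1`):
vertices are the facets with `d` vertices, and `{F, G}` is an edge iff
`F ∩ G` has `d−1` vertices (i.e. `dim (F ∩ G) = d−2`). -/
def facetDualGraph {n : ℕ} (Δ : Finset (Finset (Fin n))) (d : ℕ) :
    SimpleGraph {F : Finset (Fin n) // F ∈ Δ ∧ F.card = d} where
  Adj F G := F ≠ G ∧ (F.1 ∩ G.1).card + 1 = d
  symm := by
    constructor
    intro F G h
    exact ⟨h.1.symm, by rw [Finset.inter_comm]; exact h.2⟩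
  loopless := by constructor; intro F h; exact h.1 rfl

/-- Hartshorne's connectedness criterion: for a Noetherian ring `A` of dimension `d`,
the dual graph of `A` is connected iff `A` is connected in codimension 1, i.e.
`Spec A ∖ V(𝔞)` is connected for every ideal `𝔞` with `dim A/𝔞 < d − 1`. -/
theorem dual_graph_connected_iff_connected_in_codim_one
    (A : Type) [CommRing A] [IsNoetherianRing A] (d : ℕ) (hd : ringKrullDim A = d) :
    (dualGraph A).Connected ↔
      ∀ 𝔞 : Ideal A, ringKrullDim (A ⧸ 𝔞) + 1 < (d : WithBot (WithTop ℕ)) →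
        IsConnected ((PrimeSpectrum.zeroLocus (𝔞 : Set A))ᶜ) := by
  classical
  have hnt : Nontrivial A := by
    by_contra hn
    rw [not_nontrivial_iff_subsingleton] at hn
    rw [ringKrullDim_eq_bot_of_subsingleton] at hd
    simp at hd
  -- vertices are nonempty
  have hvne : Nonempty {p : Ideal A // p ∈ minimalPrimes A} := by
    obtain ⟨M, hM⟩ := Ideal.exists_maximal A
    have := hM.isPrime
    obtain ⟨q, hq, -⟩ := Ideal.exists_minimalPrimes_le (bot_le : (⊥ : Ideal A) ≤ M)
    exact ⟨⟨q, hq⟩⟩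
  have hprime : ∀ i : {p : Ideal A // p ∈ minimalPrimes A}, i.1.IsPrime := fun i => i.2.1.1
  -- dim of quotient by sup of two distinct minimal primes
  have hF1 : ∀ (p q : Ideal A), p ∈ minimalPrimes A → q ∈ minimalPrimes A → p ≠ q →
      ringKrullDim (A ⧸ (p ⊔ q)) + 1 ≤ ringKrullDim (A ⧸ p) := by
    intro p q hp hq hne
    haveI : p.IsPrime := hp.1.1
    exact dim_quot_add_one_le le_sup_left
      (fun hc => hne (minimal_le_eq hp hq (le_trans le_sup_right hc)))
  have hF2 : ∀ I : Ideal A, ringKrullDim (A ⧸ I) ≤ (d : WithBot ℕ∞) :=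
    fun I => hd ▸ ringKrullDim_quotient_le I
  constructor
  · -- graph connected → connected in codimension one
    intro hconn 𝔞 h𝔞
    -- every vertex has large dimension
    have hvert : ∀ i : {p : Ideal A // p ∈ minimalPrimes A},
        (d : WithBot ℕ∞) ≤ ringKrullDim (A ⧸ i.1) + 1 := by
      intro i
      by_cases hu : ∀ q ∈ minimalPrimes A, q = i.1
      · rw [dim_quot_unique_min i.2 hu, hd]
        exact self_le_add_one _
      · push_neg at hu
        obtain ⟨q, hq, hqne⟩ := hu
        have hreach := hconn.preconnected i ⟨q, hq⟩
        rw [SimpleGraph.reachable_iff_reflTransGen] at hreach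
        rcases hreach.cases_head with heq | ⟨r, ha, -⟩
        · exact absurd (congrArg Subtype.val heq.symm) hqne
        · have h2 : ringKrullDim (A ⧸ (i.1 ⊔ r.1)) + 1 = (d : WithBot (WithTop ℕ)) :=
            hd ▸ ha.2
          have h3 := hF1 i.1 r.1 i.2 r.2 (fun hc => ha.1 (Subtype.ext hc))
          calc (d : WithBot ℕ∞) = ringKrullDim (A ⧸ (i.1 ⊔ r.1)) + 1 := h2.symm
          _ ≤ ringKrullDim (A ⧸ i.1) := h3
          _ ≤ ringKrullDim (A ⧸ i.1) + 1 := self_le_add_one _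
    have hUopen : IsOpen ((PrimeSpectrum.zeroLocus (𝔞 : Set A))ᶜ) :=
      (PrimeSpectrum.isClosed_zeroLocus _).isOpen_compl
    -- each piece contains its minimal prime
    have hmem : ∀ i : {p : Ideal A // p ∈ minimalPrimes A},
        (⟨i.1, hprime i⟩ : PrimeSpectrum A) ∈
          PrimeSpectrum.zeroLocus (i.1 : Set A) ∩ (PrimeSpectrum.zeroLocus (𝔞 : Set A))ᶜ := by
      intro i
      constructor
      · exact (PrimeSpectrum.mem_zeroLocus _ _).mpr subset_rfl
      · intro hmem'
        rw [PrimeSpectrum.mem_zeroLocus] at hmem'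
        have h𝔞i : 𝔞 ≤ i.1 := SetLike.coe_subset_coe.mp hmem'
        have hle : ringKrullDim (A ⧸ i.1) ≤ ringKrullDim (A ⧸ 𝔞) :=
          dim_quot_mono (fun P hP => h𝔞i.trans hP)
        have : (d : WithBot (WithTop ℕ)) < (d : WithBot (WithTop ℕ)) :=
          lt_of_le_of_lt ((hvert i).trans (add_le_add_left hle 1)) h𝔞
        exact absurd this (lt_irrefl _)
    have hCconn : ∀ i : {p : Ideal A // p ∈ minimalPrimes A},
        IsConnected (PrimeSpectrum.zeroLocus (i.1 : Set A) ∩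
          (PrimeSpectrum.zeroLocus (𝔞 : Set A))ᶜ) := by
      intro i
      have hirr : IsIrreducible (PrimeSpectrum.zeroLocus (i.1 : Set A)) := by
        rw [PrimeSpectrum.isIrreducible_zeroLocus_iff]
        rw [(hprime i).radical]
        exact hprime i
      exact IsIrreducible.isConnected ⟨⟨_, hmem i⟩, preirr_inter_open hirr.2 hUopen⟩
    have hadj : ∀ i j : {p : Ideal A // p ∈ minimalPrimes A}, (dualGraph A).Adj i j →
        ((PrimeSpectrum.zeroLocus (i.1 : Set A) ∩ (PrimeSpectrum.zeroLocus (𝔞 : Set A))ᶜ) ∩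
         (PrimeSpectrum.zeroLocus (j.1 : Set A) ∩
           (PrimeSpectrum.zeroLocus (𝔞 : Set A))ᶜ)).Nonempty := by
      intro i j hij
      have h2 : ringKrullDim (A ⧸ (i.1 ⊔ j.1)) + 1 = (d : WithBot (WithTop ℕ)) := hd ▸ hij.2
      have hlt : ringKrullDim (A ⧸ 𝔞) < ringKrullDim (A ⧸ (i.1 ⊔ j.1)) :=
        add_one_lt_cancel (h2 ▸ h𝔞)
      obtain ⟨P, hP1, hP2⟩ := exists_prime_not_mem hlt
      have hPU : P ∈ (PrimeSpectrum.zeroLocus (𝔞 : Set A))ᶜ := by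
        rw [Set.mem_compl_iff, PrimeSpectrum.mem_zeroLocus]
        exact fun hc => hP2 (SetLike.coe_subset_coe.mp hc)
      refine ⟨P, ⟨?_, hPU⟩, ⟨?_, hPU⟩⟩
      · exact (PrimeSpectrum.mem_zeroLocus _ _).mpr
          (SetLike.coe_subset_coe.mpr (le_sup_left.trans hP1))
      · exact (PrimeSpectrum.mem_zeroLocus _ _).mpr
          (SetLike.coe_subset_coe.mpr (le_sup_right.trans hP1))
    have hcover : (PrimeSpectrum.zeroLocus (𝔞 : Set A))ᶜ =
        ⋃ i : {p : Ideal A // p ∈ minimalPrimes A},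
          PrimeSpectrum.zeroLocus (i.1 : Set A) ∩ (PrimeSpectrum.zeroLocus (𝔞 : Set A))ᶜ := by
      apply le_antisymm
      · intro x hx
        obtain ⟨q, hq, hqx⟩ := exists_min_le x
        exact Set.mem_iUnion.mpr ⟨⟨q, hq⟩, ⟨(PrimeSpectrum.mem_zeroLocus _ _).mpr
          (SetLike.coe_subset_coe.mpr hqx), hx⟩⟩
      · intro x hx
        obtain ⟨i, hi⟩ := Set.mem_iUnion.mp hx
        exact hi.2
    rw [hcover]
    haveI := hvne
    apply IsConnected.iUnion_of_reflTransGen hCconn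
    intro i j
    have hreach := hconn.preconnected i j
    rw [SimpleGraph.reachable_iff_reflTransGen] at hreach
    exact Relation.ReflTransGen.mono (fun a b hab => hadj a b hab) _ _ hreach
  · -- connected in codimension one → graph connected
    intro h
    rw [SimpleGraph.connected_iff]
    refine ⟨fun i j => ?_, hvne⟩
    by_contra hreach
    -- split the minimal primes into those reachable from `i` and the rest
    let R : Ideal A → Prop :=
      fun p => ∃ hm : p ∈ minimalPrimes A, (dualGraph A).Reachable i ⟨p, hm⟩
    let F : Finset (Ideal A) := (minimalPrimes.finite_of_isNoetherianRing A).toFinset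
    have hmemF : ∀ {p : Ideal A}, p ∈ F ↔ p ∈ minimalPrimes A := by
      intro p
      simp [F, Set.Finite.mem_toFinset]
    let FS : Finset (Ideal A) := F.filter R
    let FT : Finset (Ideal A) := F.filter (fun p => ¬ R p)
    have hFSmin : ∀ {p : Ideal A}, p ∈ FS → p ∈ minimalPrimes A := by
      intro p hp
      exact hmemF.mp (Finset.mem_filter.mp hp).1
    have hFTmin : ∀ {p : Ideal A}, p ∈ FT → p ∈ minimalPrimes A := by
      intro p hp
      exact hmemF.mp (Finset.mem_filter.mp hp).1
    have hiFS : i.1 ∈ FS :=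
      Finset.mem_filter.mpr ⟨hmemF.mpr i.2, ⟨i.2, by rw [Subtype.coe_eta]⟩⟩
    have hjFT : j.1 ∈ FT := by
      refine Finset.mem_filter.mpr ⟨hmemF.mpr j.2, ?_⟩
      rintro ⟨hm, hr⟩
      rw [Subtype.coe_eta] at hr
      exact hreach hr
    let IS : Ideal A := FS.inf id
    let IT : Ideal A := FT.inf id
    -- every prime contains IS or IT
    have hcontain : ∀ P : PrimeSpectrum A, IS ≤ P.asIdeal ∨ IT ≤ P.asIdeal := by
      intro P
      obtain ⟨q, hq, hqP⟩ := exists_min_le P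
      by_cases hR : R q
      · exact Or.inl (le_trans (Finset.inf_le (Finset.mem_filter.mpr ⟨hmemF.mpr hq, hR⟩)) hqP)
      · exact Or.inr (le_trans (Finset.inf_le (Finset.mem_filter.mpr ⟨hmemF.mpr hq, hR⟩)) hqP)
    -- no edges between the two sides
    have hcross : ∀ p ∈ FS, ∀ q ∈ FT, ringKrullDim (A ⧸ (p ⊔ q)) + 1 < (d : WithBot (WithTop ℕ)) := by
      intro p hp q hq
      have hpm := hFSmin hp
      have hqm := hFTmin hq
      have hpq : p ≠ q := by
        rintro rfl
        exact (Finset.mem_filter.mp hq).2 (Finset.mem_filter.mp hp).2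
      have hnadj : ¬ (dualGraph A).Adj ⟨p, hpm⟩ ⟨q, hqm⟩ := by
        intro hadj
        obtain ⟨hmi, hri⟩ := (Finset.mem_filter.mp hp).2
        exact (Finset.mem_filter.mp hq).2 ⟨hqm, hri.trans (SimpleGraph.Adj.reachable
          (by exact hadj))⟩
      have hne : ringKrullDim (A ⧸ (p ⊔ q)) + 1 ≠ (d : WithBot (WithTop ℕ)) := by
        intro he
        exact hnadj ⟨fun hc => hpq (congrArg Subtype.val hc), hd ▸ he⟩
      exact lt_of_le_of_ne ((hF1 p q hpm hqm hpq).trans (hF2 p)) hne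
    -- the quotient by IS ⊔ IT has small dimension
    have hdim : ringKrullDim (A ⧸ (IS ⊔ IT)) + 1 < (d : WithBot (WithTop ℕ)) := by
      rw [dim_quot]
      apply krullDim_add_one_lt_nat
      intro ℓ
      have hh : IS ⊔ IT ≤ (ℓ.head).1.asIdeal := ℓ.head.2
      obtain ⟨p, hp, hpP⟩ := (ℓ.head.1.2.inf_le').mp (le_sup_left.trans hh)
      obtain ⟨q, hq, hqP⟩ := (ℓ.head.1.2.inf_le').mp (le_sup_right.trans hh)
      have hmap : StrictMono (fun (P : {P : PrimeSpectrum A // IS ⊔ IT ≤ P.asIdeal}) =>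
          P.1) := fun a b hab => hab
      have hall : ∀ k, (p ⊔ q : Ideal A) ≤ ((ℓ.toFun k).1).asIdeal := by
        intro k
        have hmono : ℓ.head ≤ ℓ.toFun k := ℓ.monotone (Fin.zero_le k)
        exact sup_le (hpP.trans hmono) (hqP.trans hmono)
      have hmap2 : StrictMono (fun (k : Fin (ℓ.length + 1)) =>
          (⟨(ℓ.toFun k).1, hall k⟩ : {P : PrimeSpectrum A // (p ⊔ q : Ideal A) ≤ P.asIdeal})) := by
        intro a b hab
        exact ℓ.strictMono hab
      let ℓ' : LTSeries {P : PrimeSpectrum A // (p ⊔ q : Ideal A) ≤ P.asIdeal} :=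
        LTSeries.mk ℓ.length _ hmap2
      have hlen : (ℓ'.length : WithBot ℕ∞) ≤ ringKrullDim (A ⧸ (p ⊔ q)) := by
        rw [dim_quot]
        exact Order.LTSeries.length_le_krullDim ℓ'
      exact lt_of_le_of_lt (add_le_add_left hlen 1) (hcross p hp q hq)
    have hconn := h (IS ⊔ IT) hdim
    -- but the complement of V(IS ⊔ IT) is disconnected
    have hIS_not_le_j : ¬ IS ≤ j.1 := by
      intro hc
      haveI := hprime j
      obtain ⟨p, hp, hpj⟩ := (Ideal.IsPrime.inf_le' (hprime j)).mp hc
      have := minimal_le_eq j.2 (hFSmin hp) hpj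
      rw [← this] at hp
      exact (Finset.mem_filter.mp hjFT).2 ((Finset.mem_filter.mp hp).2)
    have hIT_not_le_i : ¬ IT ≤ i.1 := by
      intro hc
      obtain ⟨q, hq, hqi⟩ := (Ideal.IsPrime.inf_le' (hprime i)).mp hc
      have := minimal_le_eq i.2 (hFTmin hq) hqi
      rw [← this] at hq
      exact (Finset.mem_filter.mp hq).2 ((Finset.mem_filter.mp hiFS).2)
    have hPj : (⟨j.1, hprime j⟩ : PrimeSpectrum A) ∈
        (PrimeSpectrum.zeroLocus ((IS ⊔ IT : Ideal A) : Set A))ᶜ ∩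
        (PrimeSpectrum.zeroLocus ((IS : Ideal A) : Set A))ᶜ := by
      constructor
      · rw [Set.mem_compl_iff, PrimeSpectrum.mem_zeroLocus]
        exact fun hc => hIS_not_le_j (le_sup_left.trans (SetLike.coe_subset_coe.mp hc))
      · rw [Set.mem_compl_iff, PrimeSpectrum.mem_zeroLocus]
        exact fun hc => hIS_not_le_j (SetLike.coe_subset_coe.mp hc)
    have hPi : (⟨i.1, hprime i⟩ : PrimeSpectrum A) ∈
        (PrimeSpectrum.zeroLocus ((IS ⊔ IT : Ideal A) : Set A))ᶜ ∩
        (PrimeSpectrum.zeroLocus ((IT : Ideal A) : Set A))ᶜ := by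
      constructor
      · rw [Set.mem_compl_iff, PrimeSpectrum.mem_zeroLocus]
        exact fun hc => hIT_not_le_i (le_sup_right.trans (SetLike.coe_subset_coe.mp hc))
      · rw [Set.mem_compl_iff, PrimeSpectrum.mem_zeroLocus]
        exact fun hc => hIT_not_le_i (SetLike.coe_subset_coe.mp hc)
    obtain ⟨z, hz, hzu, hzv⟩ := hconn.isPreconnected
      ((PrimeSpectrum.zeroLocus ((IS : Ideal A) : Set A))ᶜ)
      ((PrimeSpectrum.zeroLocus ((IT : Ideal A) : Set A))ᶜ)
      (PrimeSpectrum.isClosed_zeroLocus _).isOpen_compl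
      (PrimeSpectrum.isClosed_zeroLocus _).isOpen_compl
      (by
        intro x hx
        rw [Set.mem_compl_iff, PrimeSpectrum.mem_zeroLocus] at hx
        rcases hcontain x with hc | hc
        · refine Or.inr (fun hcc => ?_)
          rw [PrimeSpectrum.mem_zeroLocus] at hcc
          exact hx (SetLike.coe_subset_coe.mpr (sup_le hc (SetLike.coe_subset_coe.mp hcc)))
        · refine Or.inl (fun hcc => ?_)
          rw [PrimeSpectrum.mem_zeroLocus] at hcc
          exact hx (SetLike.coe_subset_coe.mpr (sup_le (SetLike.coe_subset_coe.mp hcc) hc)))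
      ⟨_, hPj.1, hPj.2⟩ ⟨_, hPi.1, hPi.2⟩
    rw [Set.mem_compl_iff, PrimeSpectrum.mem_zeroLocus] at hzu hzv
    rcases hcontain z with hc | hc
    · exact hzu (SetLike.coe_subset_coe.mpr hc)
    · exact hzv (SetLike.coe_subset_coe.mpr hc)
end

section
/- Let A be a Noetherian local (or graded) ring of dimension d that is not connected in codimension 1. Then there exist ideals H ⊋ (0) and J ⊋ (0) with H ∩ J = (0) and dim A/(H + J) < d − 1. -/
/-- If every prime containing `K` contains `I`, then `dim A/K ≤ dim A/I`. -/
lemma aux_ringKrullDim_quotient_le_quotient {A : Type} [CommRing A] {I K : Ideal A}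
    (h : PrimeSpectrum.zeroLocus (K : Set A) ⊆ PrimeSpectrum.zeroLocus (I : Set A)) :
    ringKrullDim (A ⧸ K) ≤ ringKrullDim (A ⧸ I) := by
  have hsurjK : Function.Surjective (Ideal.Quotient.mk K) := Ideal.Quotient.mk_surjective
  have hsurjI : Function.Surjective (Ideal.Quotient.mk I) := Ideal.Quotient.mk_surjective
  have key : ∀ q : PrimeSpectrum (A ⧸ K), I ≤ q.asIdeal.comap (Ideal.Quotient.mk K) := by
    intro q
    have hK : K ≤ q.asIdeal.comap (Ideal.Quotient.mk K) := by
      intro x hx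
      simp only [Ideal.mem_comap, Ideal.Quotient.eq_zero_iff_mem.mpr hx]
      exact q.asIdeal.zero_mem
    have hmem : (⟨q.asIdeal.comap (Ideal.Quotient.mk K), inferInstance⟩ : PrimeSpectrum A)
        ∈ PrimeSpectrum.zeroLocus (K : Set A) := by
      rw [PrimeSpectrum.mem_zeroLocus]
      exact hK
    have := h hmem
    rwa [PrimeSpectrum.mem_zeroLocus, SetLike.coe_subset_coe] at this
  have hprime : ∀ q : PrimeSpectrum (A ⧸ K),
      ((q.asIdeal.comap (Ideal.Quotient.mk K)).map (Ideal.Quotient.mk I)).IsPrime := by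
    intro q
    exact Ideal.map_isPrime_of_surjective hsurjI (by rw [Ideal.mk_ker]; exact key q)
  apply Order.krullDim_le_of_strictMono
    (fun q ↦ (⟨_, hprime q⟩ : PrimeSpectrum (A ⧸ I)))
  intro q1 q2 hq
  have h1 : q1.asIdeal.comap (Ideal.Quotient.mk K) < q2.asIdeal.comap (Ideal.Quotient.mk K) := by
    refine lt_of_le_of_ne (Ideal.comap_mono hq.le) ?_
    intro he
    exact hq.ne (PrimeSpectrum.ext (Ideal.comap_injective_of_surjective _ hsurjK he))
  rw [← PrimeSpectrum.asIdeal_lt_asIdeal]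
  refine lt_of_le_of_ne (Ideal.map_mono h1.le) ?_
  intro he
  have h2 : ∀ q : PrimeSpectrum (A ⧸ K),
      ((q.asIdeal.comap (Ideal.Quotient.mk K)).map (Ideal.Quotient.mk I)).comap
        (Ideal.Quotient.mk I) = q.asIdeal.comap (Ideal.Quotient.mk K) := by
    intro q
    rw [Ideal.comap_map_of_surjective _ hsurjI, ← RingHom.ker_eq_comap_bot, Ideal.mk_ker,
      sup_eq_left.mpr (key q)]
  have := congrArg (Ideal.comap (Ideal.Quotient.mk I)) he
  rw [h2 q1, h2 q2] at this
  exact h1.ne this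

/-- Let `A` be a Noetherian local ring of dimension `d` that is not connected in
codimension 1.  Then there exist ideals `H ⊋ (0)` and `J ⊋ (0)` with `H ∩ J = (0)` and
`dim A/(H + J) < d − 1`. -/
theorem exists_decomposition_of_not_connected_in_codim_one
    (A : Type) [CommRing A] [IsNoetherianRing A] [IsLocalRing A]
    (d : ℕ) (hd : ringKrullDim A = d)
    (hdisc : ∃ 𝔞 : Ideal A, ringKrullDim (A ⧸ 𝔞) + 1 < (d : WithBot (WithTop ℕ)) ∧
      ¬ IsConnected ((PrimeSpectrum.zeroLocus (𝔞 : Set A))ᶜ)) :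
    ∃ H J : Ideal A, ⊥ < H ∧ ⊥ < J ∧ H ⊓ J = ⊥ ∧
      ringKrullDim (A ⧸ (H ⊔ J)) + 1 < (d : WithBot (WithTop ℕ)) := by
  classical
  obtain ⟨𝔞, hdim, hconn⟩ := hdisc
  set U : Set (PrimeSpectrum A) := (PrimeSpectrum.zeroLocus (𝔞 : Set A))ᶜ with hUdef
  have hUopen : IsOpen U := (PrimeSpectrum.isClosed_zeroLocus _).isOpen_compl
  have hdd1 : (d : WithBot (WithTop ℕ)) ≤ (d : WithBot (WithTop ℕ)) + 1 := by
    have : ((d : ℕ) : WithBot (WithTop ℕ)) ≤ ((d + 1 : ℕ) : WithBot (WithTop ℕ)) := by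
      exact_mod_cast Nat.le_succ d
    simpa using this
  -- U must be nonempty
  have hUne : U.Nonempty := by
    by_contra hne
    rw [Set.not_nonempty_iff_eq_empty] at hne
    have hzl : PrimeSpectrum.zeroLocus (𝔞 : Set A) = Set.univ := by
      have := congrArg compl hne
      simpa [hUdef] using this
    have h1 : ringKrullDim A ≤ ringKrullDim (A ⧸ 𝔞) := by
      have h2 := aux_ringKrullDim_quotient_le_quotient (A := A) (I := 𝔞) (K := (⊥ : Ideal A))
        (by rw [hzl]; exact Set.subset_univ _)
      calc ringKrullDim A = ringKrullDim (A ⧸ (⊥ : Ideal A)) :=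
            (ringKrullDim_eq_of_ringEquiv (RingEquiv.quotientBot A)).symm
        _ ≤ _ := h2
    rw [hd] at h1
    have : (d : WithBot (WithTop ℕ)) + 1 < (d : WithBot (WithTop ℕ)) :=
      lt_of_le_of_lt (add_le_add_left h1 1) hdim
    exact absurd (lt_of_le_of_lt hdd1 this) (lt_irrefl _)
  -- get the disconnection data
  rw [IsConnected, not_and] at hconn
  have hnp := hconn hUne
  rw [IsPreconnected] at hnp
  push_neg at hnp
  obtain ⟨u, v, hu, hv, hcover, hune, hvne, hdisj⟩ := hnp
  -- primary decomposition of ⊥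
  obtain ⟨s, hsinf, hsprim⟩ := Submodule.isLasker A A (⊥ : Ideal A)
  -- dichotomy for each primary component
  have dich : ∀ q ∈ s, PrimeSpectrum.zeroLocus (q : Set A) ∩ (u ∩ U) = ∅ ∨
      PrimeSpectrum.zeroLocus (q : Set A) ∩ (v ∩ U) = ∅ := by
    intro q hq
    by_contra hcon
    push_neg at hcon
    obtain ⟨h1, h2⟩ := hcon
    have hirr : IsIrreducible (PrimeSpectrum.zeroLocus (q : Set A)) :=
      (PrimeSpectrum.isIrreducible_zeroLocus_iff q).mpr (Ideal.isPrime_radical (hsprim hq))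
    have := hirr.2 (u ∩ U) (v ∩ U) (hu.inter hUopen) (hv.inter hUopen) h1 h2
    obtain ⟨x, hx⟩ := this
    have : x ∈ U ∩ (u ∩ v) := ⟨hx.2.1.2, hx.2.1.1, hx.2.2.1⟩
    rw [hdisj] at this
    exact this
  -- split the decomposition
  set S : Finset (Ideal A) := s.filter
    (fun q => PrimeSpectrum.zeroLocus (q : Set A) ∩ (v ∩ U) = ∅) with hSdef
  set H : Ideal A := S.inf id with hHdef
  set J : Ideal A := (s \ S).inf id with hJdef
  have hSv : ∀ q ∈ S, PrimeSpectrum.zeroLocus (q : Set A) ∩ (v ∩ U) = ∅ := by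
    intro q hq
    exact (Finset.mem_filter.mp hq).2
  have hTu : ∀ q ∈ s \ S, PrimeSpectrum.zeroLocus (q : Set A) ∩ (u ∩ U) = ∅ := by
    intro q hq
    rw [Finset.mem_sdiff] at hq
    rcases dich q hq.1 with h | h
    · exact h
    · exact absurd (Finset.mem_filter.mpr ⟨hq.1, h⟩) hq.2
  refine ⟨H, J, ?_, ?_, ?_, ?_⟩
  · -- ⊥ < H
    rw [bot_lt_iff_ne_bot]
    intro hH0
    obtain ⟨x, hxU, hxv⟩ : (U ∩ v).Nonempty := hvne.imp (fun x hx => ⟨hx.1, hx.2⟩)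
    have hle : S.inf id ≤ x.asIdeal := by rw [← hHdef, hH0]; exact bot_le
    obtain ⟨q, hqS, hqx⟩ := (x.isPrime.inf_le').mp hle
    have : x ∈ PrimeSpectrum.zeroLocus (q : Set A) ∩ (v ∩ U) := by
      refine ⟨?_, hxv, hxU⟩
      rw [PrimeSpectrum.mem_zeroLocus, SetLike.coe_subset_coe]
      exact hqx
    rw [hSv q hqS] at this
    exact this
  · -- ⊥ < J
    rw [bot_lt_iff_ne_bot]
    intro hJ0
    obtain ⟨x, hxU, hxu⟩ : (U ∩ u).Nonempty := hune.imp (fun x hx => ⟨hx.1, hx.2⟩)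
    have hle : (s \ S).inf id ≤ x.asIdeal := by rw [← hJdef, hJ0]; exact bot_le
    obtain ⟨q, hqT, hqx⟩ := (x.isPrime.inf_le').mp hle
    have : x ∈ PrimeSpectrum.zeroLocus (q : Set A) ∩ (u ∩ U) := by
      refine ⟨?_, hxu, hxU⟩
      rw [PrimeSpectrum.mem_zeroLocus, SetLike.coe_subset_coe]
      exact hqx
    rw [hTu q hqT] at this
    exact this
  · -- H ⊓ J = ⊥
    rw [hHdef, hJdef, ← Finset.inf_union, Finset.union_sdiff_of_subset (Finset.filter_subset _ _),
      hsinf]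
  · -- dimension bound
    have hsub : PrimeSpectrum.zeroLocus ((H ⊔ J : Ideal A) : Set A) ⊆
        PrimeSpectrum.zeroLocus (𝔞 : Set A) := by
      intro x hx
      rw [PrimeSpectrum.mem_zeroLocus, SetLike.coe_subset_coe] at hx
      by_contra hxa
      have hxU : x ∈ U := hxa
      have hHx : H ≤ x.asIdeal := le_trans le_sup_left hx
      have hJx : J ≤ x.asIdeal := le_trans le_sup_right hx
      rcases hcover hxU with hxu | hxv
      · obtain ⟨q, hqT, hqx⟩ := (x.isPrime.inf_le').mp hJx
        have : x ∈ PrimeSpectrum.zeroLocus (q : Set A) ∩ (u ∩ U) := by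
          refine ⟨?_, hxu, hxU⟩
          rw [PrimeSpectrum.mem_zeroLocus, SetLike.coe_subset_coe]
          exact hqx
        rw [hTu q hqT] at this
        exact this
      · obtain ⟨q, hqS, hqx⟩ := (x.isPrime.inf_le').mp hHx
        have : x ∈ PrimeSpectrum.zeroLocus (q : Set A) ∩ (v ∩ U) := by
          refine ⟨?_, hxv, hxU⟩
          rw [PrimeSpectrum.mem_zeroLocus, SetLike.coe_subset_coe]
          exact hqx
        rw [hSv q hqS] at this
        exact this
    have := aux_ringKrullDim_quotient_le_quotient (A := A) (I := 𝔞) (K := H ⊔ J) hsub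
    exact lt_of_le_of_lt (add_le_add_left this 1) hdim
end
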